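/- The Erdős–Rado partition relation (2^κ)⁺ → (κ⁺)²_κ holds for every infinite cardinal κ: for every coloring of the 2-element subsets of a set of size (2^κ)⁺ with κ colors, there is a monochromatic subset of size κ⁺. -/

import Mathlib

open Cardinal Set

universe u

namespace ErdosRadoAux

variable {K α ν T : Type u}

/-- `y` realizes the partial type coded by `f`: for every coded pair `(z, k)`,
`y` is distinct from `z` and `c s(z, y) = k`. -/
def Realizes (c : Sym2 α → ν) (f : K → Option (α × ν)) (y : α) : Prop :=
  ∀ i : K, ∀ p ∈ f i, y ≠ p.1 ∧ c s(p.1, y) = p.2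

/-- A chosen witness realizing the type coded by `f`, if one exists. -/
noncomputable def wit [Nonempty α] (c : Sym2 α → ν) (f : K → Option (α × ν)) : α :=
  @dite α (∃ y, Realizes c f y) (Classical.dec _)
    (fun h => h.choose) (fun _ => Classical.arbitrary α)

theorem wit_spec [Nonempty α] {c : Sym2 α → ν} {f : K → Option (α × ν)}
    (h : ∃ y, Realizes c f y) : Realizes c f (wit c f) := by
  rw [wit, dif_pos h]
  exact h.choose_spec

/-- One step of closure: add witnesses for all types with parameters in `U`. -/
def cl (K : Type u) [Nonempty α] (c : Sym2 α → ν) (U : Set α) : Set α :=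
  U ∪ wit c '' {f : K → Option (α × ν) | ∀ i : K, ∀ p ∈ f i, p.1 ∈ U}

variable [LinearOrder T] [WellFoundedLT T]

/-- The increasing chain of closed sets, indexed by a well-order `T`. -/
noncomputable def chain (K : Type u) [Nonempty α] (c : Sym2 α → ν) : T → Set α :=
  wellFounded_lt.fix fun t ih => cl K c (⋃ s : Iio t, ih s.1 s.2)

theorem chain_eq (K : Type u) [Nonempty α] (c : Sym2 α → ν) (t : T) :
    chain K c t = cl K c (⋃ s : Iio t, chain K c s.1) :=
  wellFounded_lt.fix_eq
    (fun t (ih : ∀ s, s < t → Set α) => cl K c (⋃ s : Iio t, ih s.1 s.2)) t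

/-- A chosen surjection from `K` onto `Option (Iio t)`, if one exists. -/
noncomputable def code (K : Type u) (t : T) : K → Option (Iio t) :=
  @dite _ (∃ g : K → Option (Iio t), Function.Surjective g) (Classical.dec _)
    (fun h => h.choose) (fun _ => fun _ => none)

theorem code_surj {t : T} (h : ∃ g : K → Option (Iio t), Function.Surjective g) :
    Function.Surjective (code K t) := by
  rw [code, dif_pos h]
  exact h.choose_spec

theorem exists_surj {β : Type u} [Nonempty β] (h : #β ≤ #K) :
    ∃ g : K → β, Function.Surjective g := by
  obtain ⟨e⟩ := (Cardinal.le_def β K).mp h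
  exact ⟨Function.invFun e, Function.invFun_surjective e.injective⟩

/-- The end-homogeneous sequence: `seq t` realizes the type of `a` over the
earlier values of `seq`. -/
noncomputable def seq (K : Type u) [Nonempty α] (c : Sym2 α → ν) (a : α) : T → α :=
  wellFounded_lt.fix fun t ih =>
    wit c fun i : K => (code K t i).map fun s : Iio t => (ih s.1 s.2, c s(ih s.1 s.2, a))

theorem seq_eq (K : Type u) [Nonempty α] (c : Sym2 α → ν) (a : α) (t : T) :
    seq K c a t = wit c fun i : K =>
      (code K t i).map fun s : Iio t => (seq K c a s.1, c s(seq K c a s.1, a)) :=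
  wellFounded_lt.fix_eq
    (fun t (ih : ∀ s, s < t → α) =>
      wit c fun i : K => (code K t i).map fun s : Iio t => (ih s.1 s.2, c s(ih s.1 s.2, a))) t

end ErdosRadoAux

open ErdosRadoAux

/-- The Erdős–Rado theorem `(2^κ)⁺ → (κ⁺)²_κ`: every coloring of the 2-element subsets of
a set of size `(2^κ)⁺` with at most `κ` colors admits a monochromatic set of size `κ⁺`. -/
theorem erdos_rado (κ : Cardinal.{u}) (hκ : ℵ₀ ≤ κ)
    (α ν : Type u) (hα : #α = Order.succ ((2 : Cardinal.{u}) ^ κ)) (hν : #ν ≤ κ)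
    (c : Sym2 α → ν) :
    ∃ H : Set α, Order.succ κ ≤ #H ∧
      ∃ k : ν, ∀ x ∈ H, ∀ y ∈ H, x ≠ y → c s(x, y) = k := by
  classical
  set P : Cardinal.{u} := (2 : Cardinal.{u}) ^ κ with hP
  have hℵP : ℵ₀ ≤ P := hκ.trans (cantor κ).le
  have hκP : κ ≤ P := (cantor κ).le
  have hsP : Order.succ κ ≤ P := Order.succ_le_of_lt (cantor κ)
  have hPP : P * P = P := mul_eq_self hℵP
  have hPpow : P ^ κ = P := by rw [hP, ← power_mul, mul_eq_self hκ]
  haveI : Nonempty α := by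
    rw [← mk_ne_zero_iff, hα]
    exact ((show (0 : Cardinal.{u}) ≤ P from zero_le).trans_lt (Order.lt_succ P)).ne'
  set K : Type u := Quotient.out κ with hK
  have hmkK : #K = κ := mk_out κ
  set T : Type u := (Order.succ κ).ord.ToType with hT
  have hmkT : #T = Order.succ κ := by rw [hT, mk_toType, card_ord]
  have hIio : ∀ t : T, #(Iio t) ≤ κ := fun t =>
    Order.lt_succ_iff.mp (mk_Iio_ord_toType t)
  -- cardinality bound on one closure step
  have hcl : ∀ U : Set α, #U ≤ P → #(cl K c U) ≤ P := by
    intro U hU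
    have himg : #({f : K → Option (α × ν) | ∀ i : K, ∀ p ∈ f i, p.1 ∈ U} :
        Set (K → Option (α × ν))) ≤ P := by
      have hsurj : ∃ ψ : (K → Option (↥U × ν)) →
          ({f : K → Option (α × ν) | ∀ i : K, ∀ p ∈ f i, p.1 ∈ U} : Set (K → Option (α × ν))),
          Function.Surjective ψ := by
        refine ⟨fun g => ⟨fun i => (g i).map fun q => (q.1.1, q.2), ?_⟩, ?_⟩
        · intro i p hp
          rcases Option.map_eq_some_iff.mp hp with ⟨q, _, rfl⟩
          exact q.1.2
        · rintro ⟨f, hf⟩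
          refine ⟨fun i => Option.pmap (p := fun q : α × ν => q.1 ∈ U)
            (fun q hq => ((⟨q.1, hq⟩ : U), q.2)) (f i) (hf i), ?_⟩
          refine Subtype.ext (funext fun i => ?_)
          cases h : f i <;> simp [h]
      obtain ⟨ψ, hψ⟩ := hsurj
      refine (mk_le_of_surjective hψ).trans ?_
      have harr : #(K → Option (↥U × ν)) = #(Option (↥U × ν)) ^ κ := by
        rw [← hmkK, ← power_def]
      rw [harr]
      have hopt : #(Option (↥U × ν)) ≤ P := by
        rw [mk_option]
        have hprod : #(↥U × ν) ≤ P := by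
          rw [mk_prod, lift_id, lift_id]
          calc #U * #ν ≤ P * P := mul_le_mul' hU (hν.trans hκP)
            _ = P := hPP
        calc #(↥U × ν) + 1 ≤ P + P := add_le_add hprod (one_le_aleph0.trans hℵP)
          _ = P := add_eq_self hℵP
      calc #(Option (↥U × ν)) ^ κ ≤ P ^ κ := power_le_power_right hopt
        _ = P := hPpow
    rw [cl]
    calc #(U ∪ wit c '' {f : K → Option (α × ν) | ∀ i : K, ∀ p ∈ f i, p.1 ∈ U} : Set α)
        ≤ #U + #(wit c '' {f : K → Option (α × ν) | ∀ i : K, ∀ p ∈ f i, p.1 ∈ U} : Set α) :=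
          mk_union_le _ _
      _ ≤ P + P := add_le_add hU (mk_image_le.trans himg)
      _ = P := add_eq_self hℵP
  -- cardinality bound on the chain
  have hchain : ∀ t : T, #(chain (α := α) K c t) ≤ P := by
    intro t
    induction t using WellFoundedLT.induction with
    | ind t ih =>
      rw [chain_eq]
      refine hcl _ ?_
      calc #(⋃ s : Iio t, chain (α := α) K c s.1)
            ≤ sum fun s : Iio t => #(chain (α := α) K c s.1) := mk_iUnion_le_sum_mk
        _ ≤ sum fun _ : Iio t => P := sum_le_sum _ _ fun s => ih s.1 s.2
        _ = #(Iio t) * P := sum_const' _ _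
        _ ≤ P * P := mul_le_mul' ((hIio t).trans hκP) le_rfl
        _ = P := hPP
  set Uinf : Set α := ⋃ t : T, chain (α := α) K c t with hUinf
  have hUinfle : #Uinf ≤ P := by
    calc #Uinf ≤ sum fun t : T => #(chain (α := α) K c t) := mk_iUnion_le_sum_mk
      _ ≤ sum fun _ : T => P := sum_le_sum _ _ hchain
      _ = #T * P := sum_const' _ _
      _ ≤ P * P := mul_le_mul' (hmkT.le.trans hsP) le_rfl
      _ = P := hPP
  -- pick a point outside the closure
  have hex : ∃ a : α, a ∉ Uinf := by
    by_contra h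
    push_neg at h
    have huniv : Uinf = Set.univ := eq_univ_of_forall h
    have h2 : #(Set.univ : Set α) ≤ P := huniv ▸ hUinfle
    rw [mk_univ, hα] at h2
    exact absurd h2 (not_le.mpr (Order.lt_succ P))
  obtain ⟨a, ha⟩ := hex
  set x : T → α := seq K c a with hx
  -- the codes are surjective
  have hcode : ∀ t : T, Function.Surjective (code K t) := by
    intro t
    refine code_surj (exists_surj ?_)
    rw [mk_option, hmkK]
    calc #(Iio t) + 1 ≤ κ + κ := add_le_add (hIio t) (one_le_aleph0.trans hκ)
      _ = κ := add_eq_self hκ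
  -- key properties of the sequence
  have main : ∀ t : T, x t ∈ chain (α := α) K c t ∧
      ∀ s : T, s < t → x t ≠ x s ∧ c s(x s, x t) = c s(x s, a) := by
    intro t
    induction t using WellFoundedLT.induction with
    | ind t ih =>
      set f : K → Option (α × ν) :=
        fun i => (code K t i).map fun s : Iio t => (x s.1, c s(x s.1, a)) with hf
      have hxt : x t = wit c f := by
        rw [hf, hx]
        exact seq_eq K c a t
      have hmem : ∀ s : Iio t, x s.1 ∈ Uinf := by
        intro s
        exact mem_iUnion.mpr ⟨s.1, (ih s.1 s.2).1⟩
      have hreal : ∃ y, Realizes c f y := by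
        refine ⟨a, fun i p hp => ?_⟩
        rw [hf] at hp
        rcases Option.map_eq_some_iff.mp hp with ⟨s, _, rfl⟩
        exact ⟨fun h => ha (h ▸ hmem s), rfl⟩
      have hR : Realizes c f (x t) := hxt ▸ wit_spec hreal
      constructor
      · rw [chain_eq, hxt]
        refine mem_union_right _ (mem_image_of_mem _ ?_)
        intro i p hp
        rw [hf] at hp
        rcases Option.map_eq_some_iff.mp hp with ⟨s, _, rfl⟩
        exact mem_iUnion.mpr ⟨s, (ih s.1 s.2).1⟩
      · intro s hs
        obtain ⟨i, hi⟩ := hcode t (some ⟨s, hs⟩)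
        have hfi : f i = some (x s, c s(x s, a)) := by
          simp only [hf]
          rw [hi]
          rfl
        exact hR i (x s, c s(x s, a)) hfi
  have hxne : ∀ s t : T, s < t → x t ≠ x s := fun s t hst => ((main t).2 s hst).1
  have hxcol : ∀ s t : T, s < t → c s(x s, x t) = c s(x s, a) :=
    fun s t hst => ((main t).2 s hst).2
  -- pigeonhole: some color appears on a set of size κ⁺
  set d : T → ν := fun t => c s(x t, a) with hd
  have hfiber : ∃ k : ν, Order.succ κ ≤ #({t : T | d t = k} : Set T) := by
    by_contra h
    push_neg at h
    have hle : ∀ k : ν, #({t : T | d t = k} : Set T) ≤ κ :=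
      fun k => Order.lt_succ_iff.mp (h k)
    have hTκ : #T ≤ κ := by
      calc #T = #(Σ k : ν, {t : T // d t = k}) := (mk_congr (Equiv.sigmaFiberEquiv d)).symm
        _ = sum fun k : ν => #({t : T | d t = k} : Set T) := mk_sigma _
        _ ≤ sum fun _ : ν => κ := sum_le_sum _ _ hle
        _ = #ν * κ := sum_const' _ _
        _ ≤ κ * κ := mul_le_mul' hν le_rfl
        _ = κ := mul_eq_self hκ
    rw [hmkT] at hTκ
    exact absurd hTκ (not_le.mpr (Order.lt_succ κ))
  obtain ⟨k, hk⟩ := hfiber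
  refine ⟨x '' {t : T | d t = k}, ?_, k, ?_⟩
  · have hinj : InjOn x {t : T | d t = k} := by
      intro s hs t ht hst
      by_contra hne
      rcases lt_or_gt_of_ne hne with h | h
      · exact hxne s t h hst.symm
      · exact hxne t s h hst
    rw [mk_image_eq_of_injOn x _ hinj]
    exact hk
  · rintro u ⟨s, hs, rfl⟩ v ⟨t, ht, rfl⟩ huv
    have hst : s ≠ t := fun h => huv (by rw [h])
    rcases lt_or_gt_of_ne hst with h | h
    · rw [hxcol s t h]; exact hs
    · rw [Sym2.eq_swap, hxcol t s h]; exact ht
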